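/- The subgroup Q_1 of diagonal matrices in SL_2(ℝ) is generous: there exist finitely many (in fact four) elements A_1, A_2, A_3, A_4 ∈ SL_2(ℝ) such that SL_2(ℝ) = ⋃_{i=1}^4 A_i · (Q_1)^{SL_2(ℝ)}, where (Q_1)^{SL_2(ℝ)} is the union of all conjugates of Q_1. -/

import Mathlib

abbrev SL2 := Matrix.SpecialLinearGroup (Fin 2) ℝ

instance : Fact (Even (Fintype.card (Fin 2))) := ⟨by norm_num⟩

/-- A diagonal element of `SL₂(ℝ)`. -/
def IsDiag (q : SL2) : Prop :=
  (q : Matrix (Fin 2) (Fin 2) ℝ) 0 1 = 0 ∧ (q : Matrix (Fin 2) (Fin 2) ℝ) 1 0 = 0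


lemma sl2_eq_of_mul (N P q : SL2) (h : N * P = P * q) : N = P⁻¹⁻¹ * q * P⁻¹ := by
  rw [inv_inv]
  calc N = N * P * P⁻¹ := by group
  _ = P * q * P⁻¹ := by rw [h]

lemma diag_conj (N : SL2) (ht : ((N : Matrix (Fin 2) (Fin 2) ℝ) 0 0 + (N : Matrix (Fin 2) (Fin 2) ℝ) 1 1)^2 > 4) :
    ∃ g q : SL2, IsDiag q ∧ N = g⁻¹ * q * g := by
  obtain ⟨x, y, z, w, hN⟩ : ∃ x y z w : ℝ, (N : Matrix (Fin 2) (Fin 2) ℝ) = !![x,y;z,w] := by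
    refine ⟨(N : Matrix (Fin 2) (Fin 2) ℝ) 0 0, (N : Matrix (Fin 2) (Fin 2) ℝ) 0 1,
      (N : Matrix (Fin 2) (Fin 2) ℝ) 1 0, (N : Matrix (Fin 2) (Fin 2) ℝ) 1 1, ?_⟩
    ext i j; fin_cases i <;> fin_cases j <;> rfl
  have hdet : x * w - y * z = 1 := by
    have h2 := N.2
    rw [hN, Matrix.det_fin_two_of] at h2
    exact h2
  rw [hN] at ht
  simp at ht
  by_cases hy0 : y = 0
  · have hxw1 : x * w = 1 := by rw [hy0] at hdet; linarith
    have hne : x - w ≠ 0 := by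
      intro h
      have : x = w := by linarith
      nlinarith
    refine ⟨(⟨!![x - w, 0; z, 1/(x-w)], by rw [Matrix.det_fin_two_of]; field_simp; ring⟩ : SL2)⁻¹,
      ⟨!![x, 0; 0, w], by simp [Matrix.det_fin_two_of, hxw1]⟩, ⟨rfl, rfl⟩, ?_⟩
    apply sl2_eq_of_mul
    ext i j
    change ((N : Matrix (Fin 2) (Fin 2) ℝ) * !![x - w, 0; z, 1/(x-w)]) i j =
      (!![x - w, 0; z, 1/(x-w)] * !![x, 0; 0, w] : Matrix (Fin 2) (Fin 2) ℝ) i j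
    simp only [hN]
    fin_cases i <;> fin_cases j <;>
      simp [Matrix.mul_apply, Fin.sum_univ_two, hy0] <;> ring
  · obtain ⟨s, hs, hs2⟩ : ∃ s : ℝ, 0 < s ∧ s^2 = (x+w)^2 - 4 :=
      ⟨Real.sqrt ((x+w)^2 - 4), Real.sqrt_pos.2 (by linarith), Real.sq_sqrt (by linarith)⟩
    obtain ⟨l, m, hlm, hsum, hdiff⟩ : ∃ l m : ℝ, l * m = 1 ∧ l + m = x + w ∧ l - m = s :=
      ⟨(x+w+s)/2, (x+w-s)/2, by nlinarith, by ring, by ring⟩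
    refine ⟨(⟨!![y, -1/s; l - x, (x - m)/(y*s)], ?_⟩ : SL2)⁻¹,
      ⟨!![l, 0; 0, m], by simp [Matrix.det_fin_two_of, hlm]⟩, ⟨rfl, rfl⟩, ?_⟩
    · rw [Matrix.det_fin_two_of]
      field_simp
      linear_combination hdiff
    apply sl2_eq_of_mul
    ext i j
    change ((N : Matrix (Fin 2) (Fin 2) ℝ) * !![y, -1/s; l - x, (x - m)/(y*s)]) i j =
      (!![y, -1/s; l - x, (x - m)/(y*s)] * !![l, 0; 0, m] : Matrix (Fin 2) (Fin 2) ℝ) i j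
    simp only [hN]
    have hyne : y ≠ 0 := hy0
    have hsne : s ≠ 0 := hs.ne'
    fin_cases i <;> fin_cases j
    · simp [Matrix.mul_apply, Fin.sum_univ_two]
      ring
    · simp [Matrix.mul_apply, Fin.sum_univ_two]
      field_simp
      ring
    · simp [Matrix.mul_apply, Fin.sum_univ_two]
      linear_combination -hdet - l*hsum + hlm
    · simp [Matrix.mul_apply, Fin.sum_univ_two]
      field_simp
      linear_combination hdet + m*hsum - hlm

lemma key_ineq (x y z w : ℝ) (hdet : x*w - y*z = 1)
    (h1 : (x+w)^2 ≤ 4) (h2 : (y-z)^2 ≤ 4)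
    (h3 : (x/13+13*w)^2 ≤ 4) (h4 : (13*z-y/13)^2 ≤ 4) : False := by
  have b1 : -2 ≤ x+w ∧ x+w ≤ 2 := ⟨by nlinarith, by nlinarith⟩
  have b2 : -2 ≤ y-z ∧ y-z ≤ 2 := ⟨by nlinarith, by nlinarith⟩
  have b3 : -2 ≤ x/13+13*w ∧ x/13+13*w ≤ 2 := ⟨by nlinarith, by nlinarith⟩
  have b4 : -2 ≤ 13*z-y/13 ∧ 13*z-y/13 ≤ 2 := ⟨by nlinarith, by nlinarith⟩
  obtain ⟨b1a, b1b⟩ := b1; obtain ⟨b2a, b2b⟩ := b2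
  obtain ⟨b3a, b3b⟩ := b3; obtain ⟨b4a, b4b⟩ := b4
  nlinarith [mul_nonneg (by linarith : (0:ℝ) ≤ 2-(x+w)) (by linarith : (0:ℝ) ≤ 2+(x/13+13*w)),
    mul_nonneg (by linarith : (0:ℝ) ≤ 2+(x+w)) (by linarith : (0:ℝ) ≤ 2-(x/13+13*w)),
    mul_nonneg (by linarith : (0:ℝ) ≤ 2-(y-z)) (by linarith : (0:ℝ) ≤ 2-(13*z-y/13)),
    mul_nonneg (by linarith : (0:ℝ) ≤ 2+(y-z)) (by linarith : (0:ℝ) ≤ 2+(13*z-y/13)),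
    sq_nonneg (x+w), sq_nonneg (x/13+13*w), sq_nonneg (y-z), sq_nonneg (13*z-y/13)]

lemma coe_inv' (A : SL2) :
    ((A⁻¹ : SL2) : Matrix (Fin 2) (Fin 2) ℝ) = (A : Matrix (Fin 2) (Fin 2) ℝ).adjugate := rfl

lemma finish_case (A M N : SL2) (hAM : N = A⁻¹ * M)
    (ht : ((N : Matrix (Fin 2) (Fin 2) ℝ) 0 0 + (N : Matrix (Fin 2) (Fin 2) ℝ) 1 1)^2 > 4) :
    ∃ g q : SL2, IsDiag q ∧ M = A * (g⁻¹ * q * g) := by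
  obtain ⟨g, q, hq, hN⟩ := diag_conj N ht
  refine ⟨g, q, hq, ?_⟩
  rw [← hN, hAM]
  group

noncomputable def Bmats : Fin 4 → SL2 :=
  ![1, ⟨!![0,1;-1,0], by norm_num [Matrix.det_fin_two_of]⟩,
    ⟨!![13,0;0,1/13], by norm_num [Matrix.det_fin_two_of]⟩,
    ⟨!![0,-13;1/13,0], by norm_num [Matrix.det_fin_two_of]⟩]

theorem cartan_stmt12 :
    ∃ A : Fin 4 → SL2, ∀ M : SL2, ∃ i : Fin 4, ∃ g q : SL2,
      IsDiag q ∧ M = A i * (g⁻¹ * q * g) := by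
  refine ⟨Bmats, fun M => ?_⟩
  obtain ⟨x, y, z, w, hM⟩ : ∃ x y z w : ℝ, (M : Matrix (Fin 2) (Fin 2) ℝ) = !![x,y;z,w] := by
    refine ⟨(M : Matrix (Fin 2) (Fin 2) ℝ) 0 0, (M : Matrix (Fin 2) (Fin 2) ℝ) 0 1,
      (M : Matrix (Fin 2) (Fin 2) ℝ) 1 0, (M : Matrix (Fin 2) (Fin 2) ℝ) 1 1, ?_⟩
    ext i j; fin_cases i <;> fin_cases j <;> rfl
  have hdet : x * w - y * z = 1 := by
    have h2 := M.2
    rw [hM, Matrix.det_fin_two_of] at h2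
    exact h2
  have key : (x+w)^2 > 4 ∨ (y-z)^2 > 4 ∨ (x/13+13*w)^2 > 4 ∨ (13*z-y/13)^2 > 4 := by
    by_contra h
    push_neg at h
    exact key_ineq x y z w hdet h.1 h.2.1 h.2.2.1 h.2.2.2
  rcases key with h | h | h | h
  · refine ⟨0, ?_⟩
    apply finish_case _ _ _ rfl
    have heq : (((Bmats 0)⁻¹ * M : SL2) : Matrix (Fin 2) (Fin 2) ℝ) 0 0 +
        (((Bmats 0)⁻¹ * M : SL2) : Matrix (Fin 2) (Fin 2) ℝ) 1 1 = x + w := by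
      rw [Matrix.SpecialLinearGroup.coe_mul, coe_inv']
      simp [Bmats, coe_inv', Matrix.adjugate_fin_two_of, hM, Matrix.mul_apply, Fin.sum_univ_two]
    rw [heq]; exact h
  · refine ⟨1, ?_⟩
    apply finish_case _ _ _ rfl
    have heq : (((Bmats 1)⁻¹ * M : SL2) : Matrix (Fin 2) (Fin 2) ℝ) 0 0 +
        (((Bmats 1)⁻¹ * M : SL2) : Matrix (Fin 2) (Fin 2) ℝ) 1 1 = y - z := by
      rw [Matrix.SpecialLinearGroup.coe_mul, coe_inv']
      simp [Bmats, coe_inv', Matrix.adjugate_fin_two_of, hM, Matrix.mul_apply, Fin.sum_univ_two]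
      ring
    rw [heq]; exact h
  · refine ⟨2, ?_⟩
    apply finish_case _ _ _ rfl
    have heq : (((Bmats 2)⁻¹ * M : SL2) : Matrix (Fin 2) (Fin 2) ℝ) 0 0 +
        (((Bmats 2)⁻¹ * M : SL2) : Matrix (Fin 2) (Fin 2) ℝ) 1 1 = x/13 + 13*w := by
      rw [Matrix.SpecialLinearGroup.coe_mul, coe_inv']
      simp [Bmats, coe_inv', Matrix.adjugate_fin_two_of, hM, Matrix.mul_apply, Fin.sum_univ_two]
      ring
    rw [heq]; exact h
  · refine ⟨3, ?_⟩
    apply finish_case _ _ _ rfl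
    have heq : (((Bmats 3)⁻¹ * M : SL2) : Matrix (Fin 2) (Fin 2) ℝ) 0 0 +
        (((Bmats 3)⁻¹ * M : SL2) : Matrix (Fin 2) (Fin 2) ℝ) 1 1 = 13*z - y/13 := by
      rw [Matrix.SpecialLinearGroup.coe_mul, coe_inv']
      simp [Bmats, coe_inv', Matrix.adjugate_fin_two_of, hM, Matrix.mul_apply, Fin.sum_univ_two]
      ring
    rw [heq]; exact h
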